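/- Let μ > −1/2 be real and n ∈ ℕ, and let f : ℝ → ℝ be f(x) = exp(−x²/2) H_n^μ(x). Then for every x ≠ 0, −(D_μ(D_μ f))(x) + x² f(x) = (2n + 2μ + 1) f(x); i.e., the weighted generalized Hermite function is an eigenfunction of the Bose-like oscillator Hamiltonian (1/2)(−D_μ² + x²) with eigenvalue n + μ + 1/2. -/

import Mathlib

open MeasureTheory
open scoped BigOperators Nat

/-- Generalized factorial `γ_μ(n)`: `γ_μ(0) = 1`,
`γ_μ(n+1) = (n + 1 + 2μ θ_{n+1}) γ_μ(n)` where `θ_k = 1` if `k` is odd, `0` if even. -/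
noncomputable def genGamma (μ : ℝ) : ℕ → ℝ
  | 0 => 1
  | n + 1 => ((n : ℝ) + 1 + 2 * μ * (if (n + 1) % 2 = 1 then (1 : ℝ) else 0)) * genGamma μ n

/-- Generalized exponential function `e_μ(z) = Σ_{n≥0} z^n / γ_μ(n)`. -/
noncomputable def genExp (μ : ℝ) (z : ℂ) : ℂ :=
  ∑' n : ℕ, z ^ n / (genGamma μ n : ℂ)

/-- Generalized Hermite polynomial
`H_n^μ(x) = n! Σ_{k=0}^{⌊n/2⌋} (-1)^k (2x)^{n-2k} / (k! γ_μ(n-2k))`. -/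
noncomputable def genHermite (μ : ℝ) (n : ℕ) (x : ℂ) : ℂ :=
  (n ! : ℂ) * ∑ k ∈ Finset.range (n / 2 + 1),
    (-1) ^ k * (2 * x) ^ (n - 2 * k) / ((k ! : ℂ) * ((genGamma μ (n - 2 * k) : ℝ) : ℂ))

/-- Dunkl operator `(D_μ f)(x) = f'(x) + (μ/x)(f(x) - f(-x))`. -/
noncomputable def dunkl (μ : ℝ) (f : ℝ → ℂ) (x : ℝ) : ℂ :=
  deriv f x + ((μ / x : ℝ) : ℂ) * (f x - f (-x))

/-- Euler beta function `B(a,b) = Γ(a)Γ(b)/Γ(a+b)`. -/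
noncomputable def realBeta (a b : ℝ) : ℝ :=
  Real.Gamma a * Real.Gamma b / Real.Gamma (a + b)

namespace GHAux

noncomputable def gC (μ : ℝ) (n : ℕ) : ℂ := ((genGamma μ n : ℝ) : ℂ)

lemma genGamma_pos {μ : ℝ} (hμ : -(1/2) < μ) : ∀ n, 0 < genGamma μ n
  | 0 => one_pos
  | (n+1) => by
      have h := genGamma_pos hμ n
      rw [genGamma]
      refine mul_pos ?_ h
      rcases Nat.even_or_odd (n+1) with he | ho
      · have : (n+1) % 2 = 0 := Nat.even_iff.mp he
        rw [this]
        norm_num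
        positivity
      · have : (n+1) % 2 = 1 := Nat.odd_iff.mp ho
        rw [this]
        norm_num
        have : (0:ℝ) ≤ n := Nat.cast_nonneg n
        nlinarith

lemma gC_ne_zero {μ : ℝ} (hμ : -(1/2) < μ) (n : ℕ) : gC μ n ≠ 0 := by
  simp [gC, Complex.ofReal_ne_zero, ne_of_gt (genGamma_pos hμ n)]

lemma gC_zero (μ : ℝ) : gC μ 0 = 1 := by simp [gC, genGamma]

lemma gC_succ_odd (μ : ℝ) (n : ℕ) (h : (n+1) % 2 = 1) :
    gC μ (n+1) = ((n:ℂ) + 1 + 2*(μ:ℂ)) * gC μ n := by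
  simp only [gC, genGamma, h, if_pos]
  push_cast
  ring

lemma gC_succ_even (μ : ℝ) (n : ℕ) (h : (n+1) % 2 = 0) :
    gC μ (n+1) = ((n:ℂ) + 1) * gC μ n := by
  have h1 : ¬ ((n+1) % 2 = 1) := by omega
  simp only [gC, genGamma, h1, if_false]
  push_cast
  ring

lemma fact_ne (k : ℕ) : (k ! : ℂ) ≠ 0 := Nat.cast_ne_zero.mpr (Nat.factorial_ne_zero k)

lemma cast_ne' {μ : ℝ} (hμ : -(1/2) < μ) (a : ℕ) : ((a:ℂ) + 1 + 2*(μ:ℂ)) ≠ 0 := by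
  have h0 : (0:ℝ) < (a:ℝ) + 1 + 2*μ := by
    have := Nat.cast_nonneg (α := ℝ) a
    linarith
  have h2 : ((a:ℂ) + 1 + 2*(μ:ℂ)) = (((a:ℝ) + 1 + 2*μ : ℝ) : ℂ) := by push_cast; ring
  rw [h2]
  exact_mod_cast ne_of_gt h0

lemma genHermite_def (μ : ℝ) (n : ℕ) (z : ℂ) :
    genHermite μ n z = (n ! : ℂ) * ∑ k ∈ Finset.range (n / 2 + 1),
      (-1) ^ k * (2 * z) ^ (n - 2 * k) / ((k ! : ℂ) * gC μ (n - 2 * k)) := rfl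

/-- formal derivative of genHermite -/
noncomputable def gH' (μ : ℝ) (n : ℕ) (z : ℂ) : ℂ :=
  (n ! : ℂ) * ∑ k ∈ Finset.range (n / 2 + 1),
    (-1) ^ k * (((n - 2 * k : ℕ) : ℂ) * (2 * z) ^ (n - 2 * k - 1) * 2) /
      ((k ! : ℂ) * gC μ (n - 2 * k))

lemma Q1 {μ : ℝ} (hμ : -(1/2) < μ) (n : ℕ) (z : ℂ) :
    z * gH' μ n z + (μ:ℂ) * (1 - (-1)^n) * genHermite μ n z
      = 2 * (n:ℂ) * z * genHermite μ (n-1) z := by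
  rcases n with _ | m
  · simp [gH', genHermite_def]
  · have lhs_eq : z * gH' μ (m+1) z + (μ:ℂ) * (1 - (-1)^(m+1)) * genHermite μ (m+1) z
        = ((m+1)! : ℂ) * ∑ k ∈ Finset.range ((m+1)/2+1),
            (z * ((-1) ^ k * ((((m+1) - 2*k : ℕ) : ℂ) * (2*z) ^ ((m+1) - 2*k - 1) * 2) /
                ((k ! : ℂ) * gC μ ((m+1) - 2*k)))
             + (μ:ℂ) * (1 - (-1)^(m+1)) *
                ((-1) ^ k * (2*z) ^ ((m+1) - 2*k) / ((k ! : ℂ) * gC μ ((m+1) - 2*k)))) := by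
      simp only [gH', genHermite_def, Finset.mul_sum]
      rw [← Finset.sum_add_distrib]
      exact Finset.sum_congr rfl (fun k _ => by ring)
    have rhs_eq : 2 * ((m+1:ℕ):ℂ) * z * genHermite μ ((m+1)-1) z
        = ((m+1)! : ℂ) * ∑ k ∈ Finset.range (m/2+1),
            2 * z * ((-1) ^ k * (2*z) ^ (m - 2*k) / ((k ! : ℂ) * gC μ (m - 2*k))) := by
      simp only [Nat.add_sub_cancel, genHermite_def, Nat.factorial_succ, Finset.mul_sum]
      push_cast
      exact Finset.sum_congr rfl (fun k _ => by ring)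
    rw [lhs_eq, rhs_eq]
    congr 1
    rcases Nat.even_or_odd m with ⟨t, ht⟩ | ⟨t, ht⟩
    · -- m even: (m+1)/2 = m/2, ranges equal
      subst ht
      have hr : (t + t + 1)/2 + 1 = (t+t)/2 + 1 := by omega
      rw [hr]
      refine Finset.sum_congr rfl (fun k hk => ?_)
      have hk' : k ≤ t := by
        have := Finset.mem_range.mp hk
        omega
      have e1 : t + t + 1 - 2*k = (t + t - 2*k) + 1 := by omega
      have e3 : ((t + t - 2*k) + 1) % 2 = 1 := by omega
      rw [e1, Nat.add_sub_cancel, gC_succ_odd μ _ e3]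
      have hm1 : ((-1:ℂ))^(t + t + 1) = -1 := by
        rw [pow_succ]
        simp [← two_mul, pow_mul]
      rw [hm1]
      have hcast : (((t + t - 2*k) + 1 : ℕ) : ℂ) = ((t + t - 2*k : ℕ) : ℂ) + 1 := by push_cast; ring
      rw [hcast, pow_succ]
      have hg := gC_ne_zero hμ (t + t - 2*k)
      have hf := fact_ne k
      have hne := cast_ne' hμ (t + t - 2*k)
      field_simp
      ring
    · -- m odd: (m+1)/2 = m/2 + 1, extra vanishing term
      subst ht
      have hr : (2*t + 1 + 1)/2 + 1 = ((2*t+1)/2 + 1) + 1 := by omega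
      rw [hr, Finset.sum_range_succ]
      have hlast : 2*t + 1 + 1 - 2*((2*t+1)/2 + 1) = 0 := by omega
      have hm1 : ((-1:ℂ))^(2*t + 1 + 1) = 1 := by
        rw [pow_succ, pow_succ]
        simp [pow_mul]
      rw [hlast, hm1]
      simp only [Nat.cast_zero, zero_mul, mul_zero, zero_div, sub_self, zero_add, add_zero]
      refine Finset.sum_congr rfl (fun k hk => ?_)
      have hk' : k ≤ t := by
        have := Finset.mem_range.mp hk
        omega
      have e1 : 2*t + 1 + 1 - 2*k = (2*t + 1 - 2*k) + 1 := by omega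
      have e3 : ((2*t + 1 - 2*k) + 1) % 2 = 0 := by omega
      rw [e1, Nat.add_sub_cancel, gC_succ_even μ _ e3]
      have hcast : (((2*t + 1 - 2*k) + 1 : ℕ) : ℂ) = ((2*t + 1 - 2*k : ℕ) : ℂ) + 1 := by
        push_cast; ring
      rw [hcast]
      have hg := gC_ne_zero hμ (2*t + 1 - 2*k)
      have hf := fact_ne k
      have hne : ((2*t + 1 - 2*k : ℕ) : ℂ) + 1 ≠ 0 := Nat.cast_add_one_ne_zero _
      field_simp


lemma parity (μ : ℝ) (n : ℕ) (z : ℂ) :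
    genHermite μ n (-z) = (-1)^n * genHermite μ n z := by
  simp only [genHermite_def, Finset.mul_sum]
  refine Finset.sum_congr rfl (fun k hk => ?_)
  have h2k : 2*k ≤ n := by have := Finset.mem_range.mp hk; omega
  have h1 : (2:ℂ) * -z = (-1) * (2*z) := by ring
  rw [h1, mul_pow]
  have h : n - 2*k + 2*k = n := by omega
  have hp : ((-1:ℂ))^(n) = (-1)^(n - 2*k) := by
    conv_lhs => rw [← h]
    rw [pow_add, pow_mul]
    norm_num
  rw [hp]
  ring

lemma P2 {μ : ℝ} (hμ : -(1/2) < μ) (n : ℕ) (z : ℂ) :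
    4*(n:ℂ)*z*genHermite μ (n-1) z - 4*(n:ℂ)*((n-1:ℕ):ℂ)*genHermite μ (n-2) z
      = (2*(n:ℂ) + 2*(μ:ℂ)*(1-(-1)^n)) * genHermite μ n z := by
  rcases n with _ | _ | m
  · norm_num
  · -- n = 1
    have hne : (1:ℂ) + 2*(μ:ℂ) ≠ 0 := by
      have := cast_ne' hμ 0
      simpa using this
    simp only [genHermite_def]
    norm_num [Finset.sum_range_succ, gC, genGamma]
    field_simp
    ring
  · -- n = m + 2
    have hpow : ((-1:ℂ))^(m+1+1) = (-1)^m := by rw [pow_succ, pow_succ]; ring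
    have key : (∑ k ∈ Finset.range ((m+1)/2+1),
          4 * z * ((-1)^k * (2*z)^(m+1-2*k) / ((k ! : ℂ) * gC μ (m+1-2*k))))
        - (∑ k ∈ Finset.range (m/2+1),
          4 * ((-1)^k * (2*z)^(m-2*k) / ((k ! : ℂ) * gC μ (m-2*k))))
        = ∑ k ∈ Finset.range (m/2+2),
          (2*((m:ℂ)+2) + 2*(μ:ℂ)*(1-(-1)^m)) *
            ((-1)^k * (2*z)^(m+2-2*k) / ((k ! : ℂ) * gC μ (m+2-2*k))) := by
      rcases Nat.even_or_odd m with ⟨t, ht⟩ | ⟨t, ht⟩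
      · -- m even
        subst ht
        have hsign : ((-1:ℂ))^(t+t) = 1 := by
          rw [← two_mul, pow_mul]; norm_num
        rw [hsign]
        rw [show (t+t+1)/2+1 = t+1 from by omega, show (t+t)/2+1 = t+1 from by omega,
          show (t+t)/2+2 = t+1+1 from by omega]
        set A : ℕ → ℂ := fun k => 4 * z * ((-1)^k * (2*z)^(t+t+1-2*k) / ((k ! : ℂ) * gC μ (t+t+1-2*k))) with hA
        set B : ℕ → ℂ := fun k => 4 * ((-1)^k * (2*z)^(t+t-2*k) / ((k ! : ℂ) * gC μ (t+t-2*k))) with hB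
        set Cc : ℕ → ℂ := fun k => (2*(((t+t:ℕ):ℂ) + 2) + 2*(μ:ℂ)*(1-1)) * ((-1)^k * (2*z)^(t+t+2-2*k) / ((k ! : ℂ) * gC μ (t+t+2-2*k))) with hCc
        rw [Finset.sum_range_succ' A t, Finset.sum_range_succ B t,
          Finset.sum_range_succ' Cc (t+1), Finset.sum_range_succ (fun k => Cc (k+1)) t]
        have h1 : ∀ k ∈ Finset.range t, A (k+1) - B k = Cc (k+1) := by
          intro k hk
          have hkt : k < t := Finset.mem_range.mp hk
          obtain ⟨s, hs1, hs2⟩ : ∃ s, t+t-2*k = s+1 ∧ (s+1) % 2 = 0 :=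
            ⟨t+t-2*k-1, by omega, by omega⟩
          simp only [hA, hB, hCc]
          rw [show t+t+1-2*(k+1) = s from by omega, hs1,
            show t+t+2-2*(k+1) = s+1 from by omega, gC_succ_even μ s hs2,
            pow_succ (2*z) s, pow_succ (-1:ℂ) k]
          have hc : ((t+t:ℕ):ℂ) = (s:ℂ) + 2*(k:ℂ) + 1 := by
            have : t+t = s+2*k+1 := by omega
            exact_mod_cast this
          rw [hc]
          simp only [Nat.factorial_succ]
          push_cast
          have hg := gC_ne_zero hμ s
          have hf := fact_ne k
          have hs1' : ((s:ℂ)+1) ≠ 0 := Nat.cast_add_one_ne_zero s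
          have hk1 : ((k:ℂ)+1) ≠ 0 := Nat.cast_add_one_ne_zero k
          field_simp
          ring
        have hsum : (∑ k ∈ Finset.range t, A (k+1)) - (∑ k ∈ Finset.range t, B k)
            = ∑ k ∈ Finset.range t, Cc (k+1) := by
          rw [← Finset.sum_sub_distrib]
          exact Finset.sum_congr rfl h1
        have h2 : A 0 = Cc 0 := by
          simp only [hA, hCc]
          norm_num
          rw [show t+t+2 = (t+t+1)+1 from rfl, gC_succ_even μ (t+t+1) (by omega),
            pow_succ (2*z) (t+t+1)]
          have hg := gC_ne_zero hμ (t+t+1)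
          have hne : (((t+t+1:ℕ)):ℂ)+1 ≠ 0 := Nat.cast_add_one_ne_zero (t+t+1)
          push_cast at hne ⊢
          field_simp
          have hne2 : (2:ℂ) + (t:ℂ)*2 ≠ 0 := by exact_mod_cast (by omega : 2 + t*2 ≠ 0)
          have hi : (2 + (t:ℂ)*2)⁻¹ * (2 + (t:ℂ)*2) = 1 := inv_mul_cancel₀ hne2
          linear_combination (-(8:ℂ) * z^2 * z^(t*2) * 2^(t*2)) * hi
        have h3 : B t = -Cc (t+1) := by
          simp only [hB, hCc]
          rw [show t+t-2*t = 0 from by omega, show t+t+2-2*(t+1) = 0 from by omega,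
            gC_zero, pow_succ (-1:ℂ) t]
          simp only [Nat.factorial_succ]
          have hf := fact_ne t
          have hk1 : ((t:ℂ)+1) ≠ 0 := Nat.cast_add_one_ne_zero t
          push_cast
          field_simp
          ring
        linear_combination hsum + h2 - h3
      · -- m odd
        subst ht
        have hsign : ((-1:ℂ))^(2*t+1) = -1 := Odd.neg_one_pow ⟨t, by ring⟩
        rw [hsign]
        rw [show (2*t+1+1)/2+1 = t+1+1 from by omega, show (2*t+1)/2+1 = t+1 from by omega,
          show (2*t+1)/2+2 = t+1+1 from by omega]
        set A : ℕ → ℂ := fun k => 4 * z * ((-1)^k * (2*z)^(2*t+1+1-2*k) / ((k ! : ℂ) * gC μ (2*t+1+1-2*k))) with hA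
        set B : ℕ → ℂ := fun k => 4 * ((-1)^k * (2*z)^(2*t+1-2*k) / ((k ! : ℂ) * gC μ (2*t+1-2*k))) with hB
        set Cc : ℕ → ℂ := fun k => (2*(((2*t+1:ℕ):ℂ) + 2) + 2*(μ:ℂ)*(1-(-1))) * ((-1)^k * (2*z)^(2*t+1+2-2*k) / ((k ! : ℂ) * gC μ (2*t+1+2-2*k))) with hCc
        rw [Finset.sum_range_succ' A (t+1), Finset.sum_range_succ' Cc (t+1)]
        have h1 : ∀ k ∈ Finset.range (t+1), A (k+1) - B k = Cc (k+1) := by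
          intro k hk
          have hkt : k < t+1 := Finset.mem_range.mp hk
          obtain ⟨s, hs1, hs2⟩ : ∃ s, 2*t+1-2*k = s+1 ∧ (s+1) % 2 = 1 :=
            ⟨2*t-2*k, by omega, by omega⟩
          simp only [hA, hB, hCc]
          rw [show 2*t+1+1-2*(k+1) = s from by omega, hs1,
            show 2*t+1+2-2*(k+1) = s+1 from by omega, gC_succ_odd μ s hs2,
            pow_succ (2*z) s, pow_succ (-1:ℂ) k]
          have hc : ((2*t+1:ℕ):ℂ) = (s:ℂ) + 2*(k:ℂ) + 1 := by
            have : 2*t+1 = s+2*k+1 := by omega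
            exact_mod_cast this
          rw [hc]
          simp only [Nat.factorial_succ]
          push_cast
          have hg := gC_ne_zero hμ s
          have hf := fact_ne k
          have hs1' := cast_ne' hμ s
          have hk1 : ((k:ℂ)+1) ≠ 0 := Nat.cast_add_one_ne_zero k
          field_simp
          ring
        have hsum : (∑ k ∈ Finset.range (t+1), A (k+1)) - (∑ k ∈ Finset.range (t+1), B k)
            = ∑ k ∈ Finset.range (t+1), Cc (k+1) := by
          rw [← Finset.sum_sub_distrib]
          exact Finset.sum_congr rfl h1
        have h2 : A 0 = Cc 0 := by
          simp only [hA, hCc]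
          norm_num
          rw [show 2*t+1+2 = (2*t+1+1)+1 from rfl, gC_succ_odd μ (2*t+1+1) (by omega),
            pow_succ (2*z) (2*t+1+1)]
          have hg := gC_ne_zero hμ (2*t+1+1)
          have hne := cast_ne' hμ (2*t+1+1)
          push_cast at hne ⊢
          field_simp
          ring
        linear_combination hsum + h2
    have l1 : 4*((m+1+1:ℕ):ℂ)*z*genHermite μ (m+1) z
        = ((m+1+1)! : ℂ) * ∑ k ∈ Finset.range ((m+1)/2+1),
            4 * z * ((-1)^k * (2*z)^(m+1-2*k) / ((k ! : ℂ) * gC μ (m+1-2*k))) := by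
      simp only [genHermite_def, Nat.factorial_succ, Finset.mul_sum]
      push_cast
      exact Finset.sum_congr rfl (fun k _ => by ring)
    have l2 : 4*((m+1+1:ℕ):ℂ)*((m+1:ℕ):ℂ)*genHermite μ m z
        = ((m+1+1)! : ℂ) * ∑ k ∈ Finset.range (m/2+1),
            4 * ((-1)^k * (2*z)^(m-2*k) / ((k ! : ℂ) * gC μ (m-2*k))) := by
      simp only [genHermite_def, Nat.factorial_succ, Finset.mul_sum]
      push_cast
      exact Finset.sum_congr rfl (fun k _ => by ring)
    have l3 : (2*((m+1+1:ℕ):ℂ) + 2*(μ:ℂ)*(1-(-1)^(m+1+1))) * genHermite μ (m+1+1) z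
        = ((m+1+1)! : ℂ) * ∑ k ∈ Finset.range (m/2+2),
            (2*((m:ℂ)+2) + 2*(μ:ℂ)*(1-(-1)^m)) *
              ((-1)^k * (2*z)^(m+2-2*k) / ((k ! : ℂ) * gC μ (m+2-2*k))) := by
      rw [hpow]
      simp only [genHermite_def, Nat.factorial_succ, Finset.mul_sum,
        show (m+1+1)/2 = m/2+1 from by omega]
      push_cast
      exact Finset.sum_congr rfl (fun k _ => by ring)
    have hd1 : (m+1+1) - 1 = m+1 := rfl
    have hd2 : (m+1+1) - 2 = m := rfl
    rw [hd1, hd2, l1, l2, l3, ← mul_sub, key]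

-- analytic layer (assume Q1/parity/P2 already available in real file)
lemma hasDerivAt_gH (μ : ℝ) (n : ℕ) (z : ℂ) :
    HasDerivAt (fun w => genHermite μ n w) (gH' μ n z) z := by
  have hsum : HasDerivAt
      (fun w : ℂ => ∑ k ∈ Finset.range (n/2+1),
        (-1)^k * (2*w)^(n-2*k) / ((k ! : ℂ) * gC μ (n-2*k)))
      (∑ k ∈ Finset.range (n/2+1),
        (-1)^k * (((n-2*k : ℕ):ℂ) * (2*z)^(n-2*k-1) * 2) / ((k ! : ℂ) * gC μ (n-2*k))) z := by
    refine HasDerivAt.fun_sum (fun k _ => ?_)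
    have h2 : HasDerivAt (fun w : ℂ => 2*w) 2 z := by
      simpa using (hasDerivAt_id z).const_mul (2:ℂ)
    exact ((h2.pow (n-2*k)).const_mul ((-1:ℂ)^k)).div_const _
  have := hsum.const_mul ((n ! : ℂ))
  simpa [genHermite_def, gH'] using this

lemma hasDerivAt_E (z : ℂ) :
    HasDerivAt (fun w : ℂ => Complex.exp (-w^2/2)) (-z * Complex.exp (-z^2/2)) z := by
  have h1 : HasDerivAt (fun w : ℂ => -w^2/2) (-z) z := by
    have := ((hasDerivAt_pow 2 z).neg).div_const 2
    norm_num at this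
    exact this.congr_deriv (by ring)
  have := h1.cexp
  rw [mul_comm] at this
  exact this

lemma hasDerivAt_F (μ : ℝ) (n : ℕ) (z : ℂ) :
    HasDerivAt (fun w => Complex.exp (-w^2/2) * genHermite μ n w)
      (Complex.exp (-z^2/2) * (gH' μ n z - z * genHermite μ n z)) z := by
  have := (hasDerivAt_E z).fun_mul (hasDerivAt_gH μ n z)
  exact this.congr_deriv (by ring)

lemma hasDerivAt_G (μ : ℝ) (n : ℕ) (z : ℂ) :
    HasDerivAt (fun w => Complex.exp (-w^2/2) *
        (2*(n:ℂ)*genHermite μ (n-1) w - w * genHermite μ n w))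
      (Complex.exp (-z^2/2) *
        (-z * (2*(n:ℂ)*genHermite μ (n-1) z - z * genHermite μ n z)
          + (2*(n:ℂ)*gH' μ (n-1) z - (genHermite μ n z + z * gH' μ n z)))) z := by
  have hinner : HasDerivAt (fun w : ℂ => 2*(n:ℂ)*genHermite μ (n-1) w - w * genHermite μ n w)
      (2*(n:ℂ)*gH' μ (n-1) z - (genHermite μ n z + z * gH' μ n z)) z := by
    have h1 := (hasDerivAt_gH μ (n-1) z).const_mul (2*(n:ℂ))
    have h2 := (hasDerivAt_id z).fun_mul (hasDerivAt_gH μ n z)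
    have := h1.fun_sub h2
    simp only [id] at this
    exact this.congr_deriv (by ring)
  have := (hasDerivAt_E z).fun_mul hinner
  exact this.congr_deriv (by ring)


lemma Q1s {μ : ℝ} (hμ : -(1/2) < μ) (n : ℕ) (z : ℂ) :
    (n:ℂ) * (z * gH' μ (n-1) z + (μ:ℂ)*(1+(-1)^n) * genHermite μ (n-1) z)
      = 2*(n:ℂ)*((n-1:ℕ):ℂ)*z*genHermite μ (n-2) z := by
  rcases n with _ | m
  · simp
  · have h := Q1 hμ m z
    have hs : ((-1:ℂ))^(m+1) = -(-1)^m := by rw [pow_succ]; ring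
    simp only [Nat.add_sub_cancel, hs, show m+1-2 = m-1 from rfl]
    push_cast
    linear_combination ((m:ℂ)+1) * h

lemma parity_s (μ : ℝ) (n : ℕ) (z : ℂ) :
    (n:ℂ) * genHermite μ (n-1) (-z) = -(-1)^n * ((n:ℂ) * genHermite μ (n-1) z) := by
  rcases n with _ | m
  · simp
  · simp only [Nat.add_sub_cancel, parity μ m z]
    rw [pow_succ]
    ring

lemma dunkl_f {μ : ℝ} (hμ : -(1/2) < μ) (n : ℕ) {y : ℝ} (hy : y ≠ 0) :
    dunkl μ (fun t : ℝ => Complex.exp (-(t:ℂ)^2/2) * genHermite μ n t) y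
      = Complex.exp (-(y:ℂ)^2/2) *
          (2*(n:ℂ)*genHermite μ (n-1) y - (y:ℂ) * genHermite μ n y) := by
  have hd : deriv (fun t : ℝ => Complex.exp (-(t:ℂ)^2/2) * genHermite μ n t) y
      = Complex.exp (-(y:ℂ)^2/2) * (gH' μ n y - (y:ℂ) * genHermite μ n y) :=
    ((hasDerivAt_F μ n (y:ℂ)).comp_ofReal).deriv
  simp only [dunkl, hd, Complex.ofReal_neg, neg_sq, Complex.ofReal_div]
  rw [parity μ n ((y:ℂ))]
  have hY : (y:ℂ) ≠ 0 := Complex.ofReal_ne_zero.mpr hy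
  have q1 := Q1 hμ n (y:ℂ)
  have hI : ((μ:ℂ)/(y:ℂ)) * (y:ℂ) = (μ:ℂ) := div_mul_cancel₀ _ hY
  apply mul_left_cancel₀ hY
  linear_combination Complex.exp (-(y:ℂ)^2/2) * q1
    + (Complex.exp (-(y:ℂ)^2/2) * (genHermite μ n (y:ℂ) - (-1)^n * genHermite μ n (y:ℂ))) * hI

end GHAux

theorem genHermite_function_oscillator_eigen (μ : ℝ) (hμ : -(1/2) < μ) (n : ℕ)
    (x : ℝ) (hx : x ≠ 0) :
    -(dunkl μ (dunkl μ (fun y : ℝ => Complex.exp (-(y : ℂ) ^ 2 / 2) * genHermite μ n y)) x)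
        + (x : ℂ) ^ 2 * (Complex.exp (-(x : ℂ) ^ 2 / 2) * genHermite μ n x)
      = (2 * (n : ℂ) + 2 * (μ : ℂ) + 1) *
          (Complex.exp (-(x : ℂ) ^ 2 / 2) * genHermite μ n x) := by
  open GHAux in
  have hev : dunkl μ (fun y : ℝ => Complex.exp (-(y : ℂ) ^ 2 / 2) * genHermite μ n y)
      =ᶠ[nhds x] (fun y : ℝ => Complex.exp (-(y:ℂ)^2/2) *
          (2*(n:ℂ)*genHermite μ (n-1) y - (y:ℂ) * genHermite μ n y)) := by
    filter_upwards [eventually_ne_nhds hx] with y hy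
    exact dunkl_f hμ n hy
  have hG := ((GHAux.hasDerivAt_G μ n (x:ℂ)).comp_ofReal).deriv
  have hd2 : dunkl μ (dunkl μ (fun y : ℝ => Complex.exp (-(y : ℂ) ^ 2 / 2) * genHermite μ n y)) x
      = deriv (fun y : ℝ => Complex.exp (-(y:ℂ)^2/2) *
            (2*(n:ℂ)*genHermite μ (n-1) y - (y:ℂ) * genHermite μ n y)) x
        + ((μ / x : ℝ) : ℂ) *
          ((Complex.exp (-(x:ℂ)^2/2) *
            (2*(n:ℂ)*genHermite μ (n-1) x - (x:ℂ) * genHermite μ n x))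
           - (Complex.exp (-((-x:ℝ):ℂ)^2/2) *
            (2*(n:ℂ)*genHermite μ (n-1) ((-x:ℝ):ℂ) - ((-x:ℝ):ℂ) * genHermite μ n ((-x:ℝ):ℂ)))) := by
    rw [dunkl, hev.deriv_eq, GHAux.dunkl_f hμ n hx, GHAux.dunkl_f hμ n (neg_ne_zero.mpr hx)]
  rw [hd2, hG]
  simp only [Complex.ofReal_neg, neg_sq, Complex.ofReal_div]
  rw [GHAux.parity μ n ((x:ℂ))]
  have hpar2 : 2*(n:ℂ)*genHermite μ (n-1) (-(x:ℂ))
      = -(-1:ℂ)^n * (2*(n:ℂ)*genHermite μ (n-1) (x:ℂ)) := by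
    linear_combination 2 * GHAux.parity_s μ n ((x:ℂ))
  rw [hpar2]
  have hX : (x:ℂ) ≠ 0 := Complex.ofReal_ne_zero.mpr hx
  have q1 := GHAux.Q1 hμ n ((x:ℂ))
  have q1s := GHAux.Q1s hμ n ((x:ℂ))
  have p2 := GHAux.P2 hμ n ((x:ℂ))
  have hI : ((μ:ℂ)/(x:ℂ)) * (x:ℂ) = (μ:ℂ) := div_mul_cancel₀ _ hX
  apply mul_left_cancel₀ hX
  linear_combination (Complex.exp (-(x:ℂ)^2/2) * (x:ℂ)) * q1
    - 2*Complex.exp (-(x:ℂ)^2/2) * q1s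
    + (Complex.exp (-(x:ℂ)^2/2) * (x:ℂ)) * p2
    - (Complex.exp (-(x:ℂ)^2/2) * (1+(-1:ℂ)^n) *
        (2*(n:ℂ)*genHermite μ (n-1) (x:ℂ) - (x:ℂ) * genHermite μ n (x:ℂ))) * hI
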